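/- arXiv:2001.06655 — 5 statements merged into one kernel-verified Lean document; each statement's English description precedes it below -/
import Mathlib

section
/- For the operators S*_{n,a}, one has S*_{n,a}(e_2; x) = x·log(a)·((a^(1/n)−1) + x·log a) / ((a^(1/n)−1)^2 · n^2) for all x ≥ 0, where e_2(t) = t². -/
open Real Filter

noncomputable def szasz (a : ℝ) (n : ℕ) (f : ℝ → ℝ) (x : ℝ) : ℝ :=
  ∑' k : ℕ, a ^ (-x / (a ^ ((1:ℝ)/n) - 1)) *
    (x * Real.log a) ^ k / ((a ^ ((1:ℝ)/n) - 1) ^ k * (Nat.factorial k : ℝ)) * f (k / n)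

lemma exp_tsum' (y : ℝ) : ∑' k : ℕ, y ^ k / (Nat.factorial k : ℝ) = Real.exp y := by
  rw [Real.exp_eq_exp_ℝ, NormedSpace.exp_eq_tsum_div]

lemma summable_exp_series (y : ℝ) : Summable (fun k : ℕ => y ^ k / (Nat.factorial k : ℝ)) :=
  Real.summable_pow_div_factorial y

lemma shift1 (y : ℝ) : (fun k : ℕ => ((k + 1 : ℕ) : ℝ) * y ^ (k + 1) / (Nat.factorial (k + 1) : ℝ))
      = fun k : ℕ => y * (y ^ k / (Nat.factorial k : ℝ)) := by
  funext k
  rw [Nat.factorial_succ]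
  push_cast
  have h1 : (Nat.factorial k : ℝ) ≠ 0 := by positivity
  field_simp
  ring

lemma shift2 (y : ℝ) : (fun k : ℕ => ((k + 1 : ℕ) : ℝ) ^ 2 * y ^ (k + 1) / (Nat.factorial (k + 1) : ℝ))
      = fun k : ℕ => y * ((k : ℝ) * y ^ k / (Nat.factorial k : ℝ))
          + y * (y ^ k / (Nat.factorial k : ℝ)) := by
  funext k
  rw [Nat.factorial_succ]
  push_cast
  have h1 : (Nat.factorial k : ℝ) ≠ 0 := by positivity
  field_simp
  ring

lemma summable_k_exp (y : ℝ) :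
    Summable (fun k : ℕ => (k : ℝ) * y ^ k / (Nat.factorial k : ℝ)) := by
  rw [← summable_nat_add_iff 1]
  rw [show (fun k : ℕ => ((k + 1 : ℕ) : ℝ) * y ^ (k + 1) / (Nat.factorial (k + 1) : ℝ))
      = fun k : ℕ => y * (y ^ k / (Nat.factorial k : ℝ)) from shift1 y]
  exact (summable_exp_series y).mul_left y

lemma tsum_k_exp (y : ℝ) :
    ∑' k : ℕ, (k : ℝ) * y ^ k / (Nat.factorial k : ℝ) = y * Real.exp y := by
  rw [Summable.tsum_eq_zero_add (summable_k_exp y)]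
  simp only [shift1 y, Nat.cast_zero, pow_zero]
  rw [tsum_mul_left, exp_tsum']
  simp

lemma summable_k2_exp (y : ℝ) :
    Summable (fun k : ℕ => (k : ℝ) ^ 2 * y ^ k / (Nat.factorial k : ℝ)) := by
  rw [← summable_nat_add_iff 1]
  rw [show (fun k : ℕ => ((k + 1 : ℕ) : ℝ) ^ 2 * y ^ (k + 1) / (Nat.factorial (k + 1) : ℝ))
      = fun k : ℕ => y * ((k : ℝ) * y ^ k / (Nat.factorial k : ℝ))
          + y * (y ^ k / (Nat.factorial k : ℝ)) from shift2 y]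
  exact ((summable_k_exp y).mul_left y).add ((summable_exp_series y).mul_left y)

lemma tsum_k2_exp (y : ℝ) :
    ∑' k : ℕ, (k : ℝ) ^ 2 * y ^ k / (Nat.factorial k : ℝ) = (y ^ 2 + y) * Real.exp y := by
  rw [Summable.tsum_eq_zero_add (summable_k2_exp y)]
  simp only [shift2 y, Nat.cast_zero, pow_zero]
  rw [Summable.tsum_add ((summable_k_exp y).mul_left y) ((summable_exp_series y).mul_left y),
    tsum_mul_left, tsum_mul_left, tsum_k_exp, exp_tsum']
  ring

theorem stmt_3 (a : ℝ) (ha : 1 < a) (n : ℕ) (hn : 1 ≤ n) (x : ℝ) (hx : 0 ≤ x) :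
    szasz a n (fun t => t ^ 2) x =
      x * Real.log a * ((a ^ ((1:ℝ)/n) - 1) + x * Real.log a) /
        ((a ^ ((1:ℝ)/n) - 1) ^ 2 * n ^ 2) := by
  have ha0 : 0 < a := lt_trans one_pos ha
  have hn0 : (0:ℝ) < n := by exact_mod_cast hn
  have hc : 0 < a ^ ((1:ℝ)/n) - 1 := by
    have : 1 < a ^ ((1:ℝ)/n) :=
      Real.one_lt_rpow_iff_of_pos ha0 |>.mpr (Or.inl ⟨ha, by positivity⟩)
    linarith
  set c : ℝ := a ^ ((1:ℝ)/n) - 1 with hcdef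
  set y : ℝ := x * Real.log a / c with hydef
  have hterm : ∀ k : ℕ,
      a ^ (-x / c) * (x * Real.log a) ^ k / (c ^ k * (Nat.factorial k : ℝ)) *
        ((k : ℝ) / n) ^ 2
      = (Real.exp (-y) / (n:ℝ)^2) * ((k : ℝ) ^ 2 * y ^ k / (Nat.factorial k : ℝ)) := by
    intro k
    have hexp : a ^ (-x / c) = Real.exp (-y) := by
      rw [Real.rpow_def_of_pos ha0]
      congr 1
      rw [hydef]
      ring
    have hpow : (x * Real.log a) ^ k / (c ^ k * (Nat.factorial k : ℝ))
        = y ^ k / (Nat.factorial k : ℝ) := by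
      rw [hydef, div_pow, div_div]
    rw [mul_div_assoc, hexp, hpow]
    ring
  calc szasz a n (fun t => t ^ 2) x
      = ∑' k : ℕ, (Real.exp (-y) / (n:ℝ)^2) *
          ((k : ℝ) ^ 2 * y ^ k / (Nat.factorial k : ℝ)) := by
        unfold szasz
        exact tsum_congr (fun k => by rw [← hterm k])
    _ = (Real.exp (-y) / (n:ℝ)^2) * ((y ^ 2 + y) * Real.exp y) := by
        rw [tsum_mul_left, tsum_k2_exp]
    _ = (y ^ 2 + y) / (n:ℝ)^2 := by
        rw [Real.exp_neg]
        field_simp [Real.exp_ne_zero]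
    _ = x * Real.log a * (c + x * Real.log a) / (c ^ 2 * n ^ 2) := by
        rw [hydef]
        field_simp
        ring
end

section
/- For the operators S*_{n,a}, one has S*_{n,a}(e_4; x) = x·log(a)·((a^(1/n)−1)³ + 7(a^(1/n)−1)²·x·log a + 6(a^(1/n)−1)(x·log a)² + (x·log a)³) / ((a^(1/n)−1)⁴ · n⁴) for all x ≥ 0, where e_4(t) = t⁴. -/
open Real Filter

lemma aux_desc_shift (m : ℕ) (y : ℝ) (k : ℕ) :
    (Nat.descFactorial (k + m) m : ℝ) * y ^ (k + m) / (Nat.factorial (k + m) : ℝ)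
      = y ^ m * (y ^ k / (Nat.factorial k : ℝ)) := by
  have h0 := Nat.factorial_mul_descFactorial (Nat.le_add_left m k)
  have h1 : Nat.factorial k * Nat.descFactorial (k + m) m = Nat.factorial (k + m) := by
    simpa using h0
  have h : (Nat.factorial k : ℝ) * (Nat.descFactorial (k + m) m : ℝ)
      = (Nat.factorial (k + m) : ℝ) := by exact_mod_cast congrArg (Nat.cast (R := ℝ)) h1
  have hk : (Nat.factorial k : ℝ) ≠ 0 := by positivity
  have hkm : (Nat.factorial (k + m) : ℝ) ≠ 0 := by positivity
  field_simp
  rw [pow_add]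
  linear_combination (y ^ k * y ^ m) * h

lemma aux_support (m : ℕ) (y : ℝ) :
    Function.support (fun j : ℕ => (Nat.descFactorial j m : ℝ) * y ^ j / (Nat.factorial j : ℝ))
      ⊆ Set.range (fun k : ℕ => k + m) := by
  intro j hj
  rcases le_or_gt m j with h | h
  · exact ⟨j - m, by simp; omega⟩
  · exfalso
    apply hj
    simp [Nat.descFactorial_eq_zero_iff_lt.mpr h]

lemma aux_inj (m : ℕ) : Function.Injective (fun k : ℕ => k + m) := fun a b h => by
  simpa using h

lemma aux_tsum_desc (m : ℕ) (y : ℝ) :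
    ∑' k : ℕ, (Nat.descFactorial k m : ℝ) * y ^ k / (Nat.factorial k : ℝ)
      = y ^ m * Real.exp y := by
  rw [← (aux_inj m).tsum_eq (aux_support m y)]
  simp only [aux_desc_shift]
  rw [tsum_mul_left, Real.exp_eq_exp_ℝ, NormedSpace.exp_eq_tsum_div]

lemma aux_summable_desc (m : ℕ) (y : ℝ) :
    Summable (fun k : ℕ => (Nat.descFactorial k m : ℝ) * y ^ k / (Nat.factorial k : ℝ)) := by
  have h : Summable ((fun j : ℕ => (Nat.descFactorial j m : ℝ) * y ^ j / (Nat.factorial j : ℝ))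
      ∘ (fun k : ℕ => k + m)) := by
    have := (Real.summable_pow_div_factorial y).mul_left (y ^ m)
    refine this.congr fun k => ?_
    simp [Function.comp, aux_desc_shift]
  obtain ⟨s, hs⟩ := h
  exact ⟨s, ((aux_inj m).hasSum_iff (by
    intro j hj
    by_contra hne
    exact hj (aux_support m y hne))).mp hs⟩

lemma aux_pow4 (k : ℕ) :
    ((k : ℝ)) ^ 4 = (Nat.descFactorial k 4 : ℝ) + 6 * (Nat.descFactorial k 3 : ℝ)
      + 7 * (Nat.descFactorial k 2 : ℝ) + (Nat.descFactorial k 1 : ℝ) := by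
  have h : k ^ 4 = Nat.descFactorial k 4 + 6 * Nat.descFactorial k 3
      + 7 * Nat.descFactorial k 2 + Nat.descFactorial k 1 := by
    match k with
    | 0 => rfl
    | 1 => rfl
    | 2 => rfl
    | 3 => rfl
    | (j+4) =>
      simp [Nat.descFactorial]
      ring_nf
  exact_mod_cast congrArg (Nat.cast (R := ℝ)) h

lemma aux_tsum_pow4 (y : ℝ) :
    ∑' k : ℕ, (k : ℝ) ^ 4 * y ^ k / (Nat.factorial k : ℝ)
      = (y + 7 * y ^ 2 + 6 * y ^ 3 + y ^ 4) * Real.exp y := by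
  have hcongr : ∀ k : ℕ, (k : ℝ) ^ 4 * y ^ k / (Nat.factorial k : ℝ)
      = (Nat.descFactorial k 4 : ℝ) * y ^ k / (Nat.factorial k : ℝ)
        + 6 * ((Nat.descFactorial k 3 : ℝ) * y ^ k / (Nat.factorial k : ℝ))
        + 7 * ((Nat.descFactorial k 2 : ℝ) * y ^ k / (Nat.factorial k : ℝ))
        + (Nat.descFactorial k 1 : ℝ) * y ^ k / (Nat.factorial k : ℝ) := by
    intro k
    rw [aux_pow4 k]
    ring
  rw [tsum_congr hcongr]
  have h4 := aux_summable_desc 4 y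
  have h3 := (aux_summable_desc 3 y).mul_left 6
  have h2 := (aux_summable_desc 2 y).mul_left 7
  have h1 := aux_summable_desc 1 y
  rw [Summable.tsum_add (((h4.add h3).add h2)) h1, Summable.tsum_add (h4.add h3) h2, Summable.tsum_add h4 h3,
    tsum_mul_left, tsum_mul_left, aux_tsum_desc, aux_tsum_desc, aux_tsum_desc, aux_tsum_desc]
  ring

theorem stmt_5 (a : ℝ) (ha : 1 < a) (n : ℕ) (hn : 1 ≤ n) (x : ℝ) (hx : 0 ≤ x) :
    szasz a n (fun t => t ^ 4) x =
      x * Real.log a * ((a ^ ((1:ℝ)/n) - 1) ^ 3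
        + 7 * (a ^ ((1:ℝ)/n) - 1) ^ 2 * (x * Real.log a)
        + 6 * (a ^ ((1:ℝ)/n) - 1) * (x * Real.log a) ^ 2
        + (x * Real.log a) ^ 3) /
        ((a ^ ((1:ℝ)/n) - 1) ^ 4 * n ^ 4) := by
  have ha0 : (0:ℝ) < a := by linarith
  have hb : (0:ℝ) < a ^ ((1:ℝ)/n) - 1 := by
    have : (1:ℝ) < a ^ ((1:ℝ)/n) := by
      exact (Real.one_lt_rpow_iff_of_pos ha0).mpr (Or.inl ⟨ha, by positivity⟩)
    linarith
  set b : ℝ := a ^ ((1:ℝ)/n) - 1 with hbdef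
  have hbne : b ≠ 0 := ne_of_gt hb
  have hnR : (0:ℝ) < (n:ℝ) := by exact_mod_cast hn
  have hnne : (n:ℝ) ≠ 0 := ne_of_gt hnR
  set y : ℝ := x * Real.log a / b with hydef
  have hterm : ∀ k : ℕ, a ^ (-x / b) * (x * Real.log a) ^ k
      / (b ^ k * (Nat.factorial k : ℝ)) * ((k : ℝ) / n) ^ 4
      = (Real.exp (-y) / (n:ℝ) ^ 4) * ((k : ℝ) ^ 4 * y ^ k / (Nat.factorial k : ℝ)) := by
    intro k
    have hrpow : a ^ (-x / b) = Real.exp (-y) := by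
      rw [Real.rpow_def_of_pos ha0, hydef]
      ring_nf
    have hypow : y ^ k = (x * Real.log a) ^ k / b ^ k := by
      rw [hydef, div_pow]
    rw [hrpow, hypow]
    have hk : (Nat.factorial k : ℝ) ≠ 0 := by positivity
    have hbk : b ^ k ≠ 0 := pow_ne_zero _ hbne
    field_simp
  have : szasz a n (fun t => t ^ 4) x
      = (Real.exp (-y) / (n:ℝ) ^ 4) * ∑' k : ℕ, (k : ℝ) ^ 4 * y ^ k / (Nat.factorial k : ℝ) := by
    rw [szasz, ← tsum_mul_left]
    exact tsum_congr hterm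
  rw [this, aux_tsum_pow4]
  rw [show Real.exp (-y) / (n:ℝ) ^ 4 * ((y + 7 * y ^ 2 + 6 * y ^ 3 + y ^ 4) * Real.exp y)
      = (Real.exp (-y) * Real.exp y) * ((y + 7 * y ^ 2 + 6 * y ^ 3 + y ^ 4) / (n:ℝ) ^ 4) by ring,
    ← Real.exp_add, neg_add_cancel, Real.exp_zero, one_mul, hydef]
  field_simp
end

section
/- For λ ≥ 0, the operators S*_{n,a} applied to the exponential function t ↦ e^(λt) satisfy S*_{n,a}(e^{λt}; x) = a^((e^{λ/n} − 1)·x / (a^{1/n} − 1)). -/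
open Real Filter

theorem stmt_6 (a : ℝ) (ha : 1 < a) (n : ℕ) (hn : 1 ≤ n) (x : ℝ) (hx : 0 ≤ x)
    (l : ℝ) (hl : 0 ≤ l) :
    szasz a n (fun t => Real.exp (l * t)) x =
      a ^ ((Real.exp (l / n) - 1) * x / (a ^ ((1:ℝ)/n) - 1)) := by
  have ha0 : (0:ℝ) < a := by linarith
  have hn0 : (0:ℝ) < (n:ℝ) := by exact_mod_cast hn
  have hb : 0 < a ^ ((1:ℝ)/n) - 1 := by
    have : 1 < a ^ ((1:ℝ)/n) :=
      Real.one_lt_rpow_iff_of_pos ha0 |>.2 (Or.inl ⟨ha, by positivity⟩)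
    linarith
  set b := a ^ ((1:ℝ)/n) - 1 with hbdef
  have hterm : ∀ k : ℕ,
      a ^ (-x / b) * (x * Real.log a) ^ k / (b ^ k * (Nat.factorial k : ℝ)) *
        Real.exp (l * (k / n)) =
      a ^ (-x / b) * ((x * Real.log a * Real.exp (l / n) / b) ^ k / (Nat.factorial k : ℝ)) := by
    intro k
    have he : Real.exp (l * (k / n)) = Real.exp (l / n) ^ k := by
      rw [← Real.exp_nat_mul]; ring_nf
    rw [he]
    field_simp
    rw [div_pow, mul_div_cancel₀ _ (pow_ne_zero k hb.ne')]
    ring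
  unfold szasz
  rw [← hbdef]
  simp only [hterm]
  rw [tsum_mul_left]
  have hexp : (∑' k : ℕ, (x * Real.log a * Real.exp (l / n) / b) ^ k / (Nat.factorial k : ℝ))
      = Real.exp (x * Real.log a * Real.exp (l / n) / b) := by
    rw [Real.exp_eq_exp_ℝ, NormedSpace.exp_eq_tsum_div]
  rw [hexp, Real.rpow_def_of_pos ha0, Real.rpow_def_of_pos ha0, ← Real.exp_add]
  congr 1
  field_simp
  ring
end

section
/- For a > 1, lim_{n→∞} n²·S*_{n,a}((t−x)⁴; x) = 3x², uniformly for x in any compact interval [0, b] with b > 0. -/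
open Real Filter

lemma desc_vanish (lam : ℝ) (j : ℕ) : ∀ k ∉ Set.range (· + j),
    lam ^ k / (Nat.factorial k : ℝ) * (Nat.descFactorial k j : ℝ) = 0 := by
  intro k hk
  have : k < j := by
    by_contra h
    exact hk ⟨k - j, show k - j + j = k by omega⟩
  simp [Nat.descFactorial_eq_zero_iff_lt.2 this]

lemma desc_comp (lam : ℝ) (j : ℕ) :
    (fun k : ℕ => lam ^ k / (Nat.factorial k : ℝ) * (Nat.descFactorial k j : ℝ)) ∘ (· + j)
        = fun m : ℕ => lam ^ j * (lam ^ m / (Nat.factorial m : ℝ)) := by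
  funext m
  have hd : (Nat.factorial m : ℝ) * ((m + j).descFactorial j : ℝ) = ((m + j).factorial : ℝ) := by
    exact_mod_cast congrArg (Nat.cast (R := ℝ))
      (by simpa using Nat.factorial_mul_descFactorial (Nat.le_add_left j m))
  simp only [Function.comp_apply]
  have hfac : ((m + j).factorial : ℝ) ≠ 0 := by positivity
  have hfm : (Nat.factorial m : ℝ) ≠ 0 := by positivity
  field_simp
  rw [← hd, pow_add]
  ring

lemma summable_desc (lam : ℝ) (j : ℕ) :
    Summable (fun k : ℕ => lam ^ k / (Nat.factorial k : ℝ) * (Nat.descFactorial k j : ℝ)) := by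
  rw [← Function.Injective.summable_iff (add_left_injective j) (desc_vanish lam j)]
  rw [desc_comp]
  exact (Real.summable_pow_div_factorial lam).mul_left _

lemma tsum_desc (lam : ℝ) (j : ℕ) :
    ∑' k : ℕ, lam ^ k / (Nat.factorial k : ℝ) * (Nat.descFactorial k j : ℝ)
      = lam ^ j * Real.exp lam := by
  rw [← Function.Injective.tsum_eq (f := fun k : ℕ =>
      lam ^ k / (Nat.factorial k : ℝ) * (Nat.descFactorial k j : ℝ))
      (add_left_injective j)
      (Function.support_subset_iff'.2 (desc_vanish lam j))]
  have := congrFun (desc_comp lam j)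
  simp only [Function.comp_apply] at this
  calc ∑' m : ℕ, lam ^ (m + j) / (Nat.factorial (m + j) : ℝ) * (Nat.descFactorial (m + j) j : ℝ)
      = ∑' m : ℕ, lam ^ j * (lam ^ m / (Nat.factorial m : ℝ)) := tsum_congr this
    _ = lam ^ j * Real.exp lam := by
        rw [tsum_mul_left, Real.exp_eq_exp_ℝ, NormedSpace.exp_eq_tsum_div]

lemma desc_expand (n : ℝ) (hn : n ≠ 0) (x : ℝ) (k : ℕ) :
    ((k : ℝ)/n - x)^4 = x^4 * (Nat.descFactorial k 0 : ℝ)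
      + (1/n^4 - 4*x/n^3 + 6*x^2/n^2 - 4*x^3/n) * (Nat.descFactorial k 1 : ℝ)
      + (7/n^4 - 12*x/n^3 + 6*x^2/n^2) * (Nat.descFactorial k 2 : ℝ)
      + (6/n^4 - 4*x/n^3) * (Nat.descFactorial k 3 : ℝ)
      + (1/n^4) * (Nat.descFactorial k 4 : ℝ) := by
  obtain h | h := lt_or_ge k 4
  · interval_cases k <;>
      simp only [Nat.descFactorial, Nat.cast_ofNat, Nat.cast_zero, Nat.cast_one, Nat.cast_mul,
        Nat.zero_sub, Nat.cast_succ] <;>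
      push_cast <;> field_simp <;> ring
  · obtain ⟨m, rfl⟩ := Nat.exists_eq_add_of_le h
    rw [show 4 + m = m + 4 by omega]
    have e0 : m + 4 - 0 = m + 4 := by omega
    have e1 : m + 4 - 1 = m + 3 := by omega
    have e2 : m + 4 - 2 = m + 2 := by omega
    have e3 : m + 4 - 3 = m + 1 := by omega
    simp only [Nat.descFactorial_succ, Nat.descFactorial_zero, e0, e1, e2, e3, mul_one,
      Nat.sub_zero]
    push_cast
    field_simp
    ring

lemma szasz_eq (a : ℝ) (ha : 1 < a) (n : ℕ) (hn : 1 ≤ n) (x c lam : ℝ)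
    (hcdef : c = a ^ ((1:ℝ)/n) - 1) (hc : 0 < c) (hlam : lam = x * Real.log a / c) :
    szasz a n (fun t => (t - x) ^ 4) x =
      x^4 * lam ^ 0
      + ((1/(n:ℝ)^4 - 4*x/(n:ℝ)^3 + 6*x^2/(n:ℝ)^2 - 4*x^3/(n:ℝ)) * lam ^ 1
      + ((7/(n:ℝ)^4 - 12*x/(n:ℝ)^3 + 6*x^2/(n:ℝ)^2) * lam ^ 2
      + ((6/(n:ℝ)^4 - 4*x/(n:ℝ)^3) * lam ^ 3
      + (1/(n:ℝ)^4) * lam ^ 4))) := by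
  have ha0 : (0:ℝ) < a := by linarith
  have hnR : (0:ℝ) < (n:ℝ) := by exact_mod_cast hn
  have hEa : a ^ (-x / c) = Real.exp (-lam) := by
    rw [Real.rpow_def_of_pos ha0, hlam]
    ring_nf
  have hlc : lam * c = x * Real.log a := by rw [hlam]; exact div_mul_cancel₀ _ hc.ne'
  have hterm : ∀ k : ℕ, a ^ (-x / c) *
      (x * Real.log a) ^ k / (c ^ k * (Nat.factorial k : ℝ)) * (((k:ℝ) / n - x) ^ 4)
      = x^4 * (Real.exp (-lam) * (lam ^ k / (Nat.factorial k : ℝ) * (Nat.descFactorial k 0 : ℝ)))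
      + ((1/(n:ℝ)^4 - 4*x/(n:ℝ)^3 + 6*x^2/(n:ℝ)^2 - 4*x^3/(n:ℝ)) *
          (Real.exp (-lam) * (lam ^ k / (Nat.factorial k : ℝ) * (Nat.descFactorial k 1 : ℝ)))
      + ((7/(n:ℝ)^4 - 12*x/(n:ℝ)^3 + 6*x^2/(n:ℝ)^2) *
          (Real.exp (-lam) * (lam ^ k / (Nat.factorial k : ℝ) * (Nat.descFactorial k 2 : ℝ)))
      + ((6/(n:ℝ)^4 - 4*x/(n:ℝ)^3) *
          (Real.exp (-lam) * (lam ^ k / (Nat.factorial k : ℝ) * (Nat.descFactorial k 3 : ℝ)))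
      + (1/(n:ℝ)^4) *
          (Real.exp (-lam) * (lam ^ k / (Nat.factorial k : ℝ) * (Nat.descFactorial k 4 : ℝ)))))) := by
    intro k
    rw [hEa, desc_expand (n:ℝ) hnR.ne' x k, ← hlc]
    have hfk : (Nat.factorial k : ℝ) ≠ 0 := by positivity
    field_simp
    ring
  have S : ∀ r : ℝ, ∀ j : ℕ, Summable (fun k : ℕ =>
      r * (Real.exp (-lam) * (lam ^ k / (Nat.factorial k : ℝ) * (Nat.descFactorial k j : ℝ)))) :=
    fun r j => ((summable_desc lam j).mul_left _).mul_left r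
  have hts : ∀ r : ℝ, ∀ j : ℕ, (∑' k : ℕ,
      r * (Real.exp (-lam) * (lam ^ k / (Nat.factorial k : ℝ) * (Nat.descFactorial k j : ℝ))))
      = r * lam ^ j := by
    intro r j
    rw [tsum_mul_left, tsum_mul_left, tsum_desc, Real.exp_neg]
    field_simp [Real.exp_ne_zero]
  have h0 : szasz a n (fun t => (t - x) ^ 4) x = ∑' k : ℕ,
      (a ^ (-x / c) * (x * Real.log a) ^ k / (c ^ k * (Nat.factorial k : ℝ)) *
        (((k:ℝ) / n - x) ^ 4)) := by
    simp only [szasz, ← hcdef]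
  rw [h0, tsum_congr hterm,
    Summable.tsum_add (S _ 0) ((S _ 1).add ((S _ 2).add ((S _ 3).add (S _ 4)))),
    Summable.tsum_add (S _ 1) ((S _ 2).add ((S _ 3).add (S _ 4))),
    Summable.tsum_add (S _ 2) ((S _ 3).add (S _ 4)),
    Summable.tsum_add (S _ 3) (S _ 4),
    hts, hts, hts, hts, hts]

lemma poly_id (n x r : ℝ) (hn : n ≠ 0) :
    n^2 * (x^4 * (n*x*r) ^ 0
      + ((1/n^4 - 4*x/n^3 + 6*x^2/n^2 - 4*x^3/n) * (n*x*r) ^ 1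
      + ((7/n^4 - 12*x/n^3 + 6*x^2/n^2) * (n*x*r) ^ 2
      + ((6/n^4 - 4*x/n^3) * (n*x*r) ^ 3
      + (1/n^4) * (n*x*r) ^ 4))))
    = 3*x^2 + (x^4*n^2*(r-1)^4 + 6*x^3*(n*(r*(r-1)^2)) + x^2*(7*r^2-4*r-3) + x*(r*(1/n))) := by
  field_simp
  ring

lemma c_ub (t : ℝ) (ht0 : 0 < t) (ht1 : t ≤ 1) : Real.exp t - 1 ≤ t + t^2 := by
  have h2 := Real.exp_bound' ht0.le ht1 (n := 2) (by norm_num)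
  simp [Finset.sum_range_succ, Nat.factorial] at h2
  nlinarith [sq_nonneg t]

lemma r_bound (t c r : ℝ) (ht0 : 0 < t) (hct : t ≤ c) (hcub : c ≤ t + t^2)
    (hrdef : r = t/c) : 1 - r ≤ t := by
  have hc0 : 0 < c := lt_of_lt_of_le ht0 hct
  have hrc : r * c = t := by rw [hrdef]; exact div_mul_cancel₀ _ hc0.ne'
  nlinarith [mul_pos ht0 hc0, mul_pos ht0 ht0]

lemma bound_lemma (b L u n x r K : ℝ) (hb : 0 < b) (hL : 0 < L) (hu0 : 0 < u) (hu1 : u ≤ 1)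
    (hnu : n * u = 1) (hn0 : 0 < n) (hx0 : 0 ≤ x) (hxb : x ≤ b) (hr0 : 0 < r) (hr1 : r ≤ 1)
    (heLu : 1 - r ≤ L * u) (hKdef : K = b^4*L^4 + 6*b^3*L^2 + 10*b^2*L + b) :
    |3 * x ^ 2 - (3*x^2 + (x^4*n^2*(r-1)^4 + 6*x^3*(n*(r*(r-1)^2)) + x^2*(7*r^2-4*r-3)
      + x*(r*u)))| ≤ K * u := by
  have he0 : 0 ≤ 1 - r := by linarith
  have hne : n * (1 - r) ≤ L := by
    calc n*(1-r) ≤ n*(L*u) := mul_le_mul_of_nonneg_left heLu hn0.le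
    _ = L * (n*u) := by ring
    _ = L := by rw [hnu, mul_one]
  have hne0 : 0 ≤ n * (1-r) := by positivity
  have hxb4 : x^4 ≤ b^4 := pow_le_pow_left₀ hx0 hxb 4
  have hxb3 : x^3 ≤ b^3 := pow_le_pow_left₀ hx0 hxb 3
  have hxb2 : x^2 ≤ b^2 := pow_le_pow_left₀ hx0 hxb 2
  have hu2 : u^2 ≤ u := by nlinarith
  have t1 : x^4*n^2*(r-1)^4 ≤ b^4*L^4*u := by
    have h2 : (n*(1-r))^2 ≤ L^2 := pow_le_pow_left₀ hne0 hne 2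
    have h3 : (1-r)^2 ≤ (L*u)^2 := pow_le_pow_left₀ he0 heLu 2
    have h4 : (n*(1-r))^2 * (1-r)^2 ≤ L^2 * (L*u)^2 :=
      mul_le_mul h2 h3 (sq_nonneg _) (sq_nonneg _)
    have h5 : L^2 * (L*u)^2 = L^4 * u^2 := by ring
    have h6 : n^2*(r-1)^4 ≤ L^4 * u := by
      have e : n^2*(r-1)^4 = (n*(1-r))^2 * (1-r)^2 := by ring
      rw [e]
      refine h4.trans ?_
      rw [h5]
      exact mul_le_mul_of_nonneg_left hu2 (by positivity)
    calc x^4*n^2*(r-1)^4 = x^4 * (n^2*(r-1)^4) := by ring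
    _ ≤ b^4 * (L^4*u) := mul_le_mul hxb4 h6 (by positivity) (by positivity)
    _ = b^4*L^4*u := by ring
  have t1' : 0 ≤ x^4*n^2*(r-1)^4 := by positivity
  have t2 : 6*x^3*(n*(r*(r-1)^2)) ≤ 6*b^3*L^2*u := by
    have h2 : (n*(1-r)) * (1-r) ≤ L * (L*u) :=
      mul_le_mul hne heLu he0 hL.le
    have h3 : r * ((n*(1-r)) * (1-r)) ≤ 1 * (L * (L*u)) :=
      mul_le_mul hr1 h2 (by positivity) one_pos.le
    have h4 : x^3 * (r * ((n*(1-r)) * (1-r))) ≤ b^3 * (1 * (L * (L*u))) :=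
      mul_le_mul hxb3 h3 (by positivity) (by positivity)
    calc 6*x^3*(n*(r*(r-1)^2)) = 6*(x^3 * (r * ((n*(1-r)) * (1-r)))) := by ring
    _ ≤ 6*(b^3 * (1 * (L * (L*u)))) := by linarith
    _ = 6*b^3*L^2*u := by ring
  have t2' : 0 ≤ 6*x^3*(n*(r*(r-1)^2)) := by
    have h1 : 6*x^3*(n*(r*(r-1)^2)) = 6*x^3*(r * ((n*(1-r)) * (1-r))) := by ring
    rw [h1]; positivity
  have t3l : -(10*b^2*L*u) ≤ x^2*(7*r^2-4*r-3) := by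
    have h2 : -(x^2 * (10*(1-r))) ≤ x^2*(7*r^2-4*r-3) := by
      nlinarith [sq_nonneg (1-r), pow_nonneg hx0 2]
    have h3 : x^2 * (10*(1-r)) ≤ b^2 * (10*(L*u)) := by
      have := mul_le_mul hxb2 (by linarith : 10*(1-r) ≤ 10*(L*u)) (by linarith) (by positivity)
      linarith
    have h4 : b^2 * (10*(L*u)) = 10*b^2*L*u := by ring
    linarith
  have t3u : x^2*(7*r^2-4*r-3) ≤ 0 := by
    have hq : 0 ≤ (1-r)*(7*r+3) := mul_nonneg he0 (by linarith)
    nlinarith [mul_nonneg (pow_nonneg hx0 2) hq]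
  have t4 : x*(r*u) ≤ b*u := by
    have : x*(r*u) ≤ b*(1*u) := mul_le_mul hxb (mul_le_mul_of_nonneg_right hr1 hu0.le)
      (by positivity) hb.le
    linarith
  have t4' : 0 ≤ x*(r*u) := by positivity
  have hKu : K*u = b^4*L^4*u + 6*b^3*L^2*u + 10*b^2*L*u + b*u := by rw [hKdef]; ring
  have hb1 : 0 ≤ b^4*L^4*u := by positivity
  have hb2 : 0 ≤ 6*b^3*L^2*u := by positivity
  have hb4 : 0 ≤ b*u := by positivity
  rw [abs_le]
  constructor <;> linarith

theorem stmt_12 (a : ℝ) (ha : 1 < a) (b : ℝ) (hb : 0 < b) :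
    TendstoUniformlyOn
      (fun (n : ℕ) (x : ℝ) => (n : ℝ) ^ 2 * szasz a n (fun t => (t - x) ^ 4) x)
      (fun x => 3 * x ^ 2) Filter.atTop (Set.Icc 0 b) := by
  have ha0 : (0:ℝ) < a := by linarith
  have hL : 0 < Real.log a := Real.log_pos ha
  obtain ⟨L, hLdef⟩ : ∃ L : ℝ, L = Real.log a := ⟨_, rfl⟩
  rw [← hLdef] at hL
  rw [Metric.tendstoUniformlyOn_iff]
  intro ε hε
  obtain ⟨K, hKdef⟩ : ∃ K : ℝ, K = b^4*L^4 + 6*b^3*L^2 + 10*b^2*L + b := ⟨_, rfl⟩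
  have hK : 0 < K := by rw [hKdef]; positivity
  obtain ⟨N, hN⟩ := exists_nat_gt (max (max 1 L) (K / ε))
  rw [eventually_atTop]
  refine ⟨N, fun n hn x hx => ?_⟩
  obtain ⟨hx0, hxb⟩ := hx
  have hnN : (N:ℝ) ≤ (n:ℝ) := by exact_mod_cast hn
  have hn1 : (1:ℝ) < (n:ℝ) :=
    (lt_of_le_of_lt ((le_max_left _ _).trans (le_max_left _ _)) hN).trans_le hnN
  have hnL : L < (n:ℝ) :=
    (lt_of_le_of_lt ((le_max_right _ _).trans (le_max_left _ _)) hN).trans_le hnN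
  have hnK : K / ε < (n:ℝ) := (lt_of_le_of_lt (le_max_right _ _) hN).trans_le hnN
  have hn0 : (0:ℝ) < (n:ℝ) := by linarith
  have hnn : 1 ≤ n := by exact_mod_cast hn1.le
  obtain ⟨u, hudef⟩ : ∃ u : ℝ, u = 1/(n:ℝ) := ⟨_, rfl⟩
  have hu0 : 0 < u := by rw [hudef]; positivity
  have hnu : (n:ℝ) * u = 1 := by rw [hudef, mul_one_div, div_self hn0.ne']
  have hu1 : u ≤ 1 := by rw [hudef, div_le_one hn0]; linarith
  obtain ⟨t, htdef⟩ : ∃ t : ℝ, t = L * u := ⟨_, rfl⟩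
  have ht0 : 0 < t := by rw [htdef]; positivity
  have ht1 : t ≤ 1 := by
    rw [htdef, hudef, mul_one_div, div_le_one hn0]; linarith
  obtain ⟨c, hcdef⟩ : ∃ c : ℝ, c = a ^ ((1:ℝ)/n) - 1 := ⟨_, rfl⟩
  have hcexp : c = Real.exp t - 1 := by
    rw [hcdef, Real.rpow_def_of_pos ha0, htdef, hudef, hLdef]
  have hct : t ≤ c := by
    have := Real.add_one_le_exp t
    rw [hcexp]; linarith
  have hc0 : 0 < c := lt_of_lt_of_le ht0 hct
  have hcub : c ≤ t + t^2 := by rw [hcexp]; exact c_ub t ht0 ht1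
  obtain ⟨r, hrdef⟩ : ∃ r : ℝ, r = t / c := ⟨_, rfl⟩
  have hr0 : 0 < r := by rw [hrdef]; positivity
  have hr1 : r ≤ 1 := by rw [hrdef, div_le_one hc0]; exact hct
  have hre : 1 - r ≤ t := r_bound t c r ht0 hct hcub hrdef
  have heLu : 1 - r ≤ L * u := by rw [← htdef]; exact hre
  have hlam : x * L / c = (n:ℝ) * x * r := by
    rw [hrdef, htdef, hudef]
    field_simp
  have hKu : K * u < ε := by
    rw [hudef, mul_one_div, div_lt_iff₀ hn0]
    calc K = (K/ε) * ε := by field_simp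
    _ < (n:ℝ) * ε := mul_lt_mul_of_pos_right hnK hε
    _ = ε * (n:ℝ) := by ring
  have hid : (n:ℝ)^2 * szasz a n (fun s => (s - x) ^ 4) x =
      3*x^2 + (x^4*(n:ℝ)^2*(r-1)^4 + 6*x^3*((n:ℝ)*(r*(r-1)^2)) + x^2*(7*r^2-4*r-3)
        + x*(r*u)) := by
    rw [hudef]
    rw [szasz_eq a ha n hnn x c ((n:ℝ) * x * r) hcdef hc0 (by rw [← hlam, hLdef])]
    exact poly_id (n:ℝ) x r hn0.ne'
  rw [Real.dist_eq, hid]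
  calc |3 * x ^ 2 - (3*x^2 + (x^4*(n:ℝ)^2*(r-1)^4 + 6*x^3*((n:ℝ)*(r*(r-1)^2))
        + x^2*(7*r^2-4*r-3) + x*(r*u)))| ≤ K * u :=
      bound_lemma b L u (n:ℝ) x r K hb hL hu0 hu1 hnu hn0 hx0 hxb hr0 hr1 heLu hKdef
  _ < ε := hKu
end

section
/- For a > 1 and x ≥ 0, lim_{n→∞} (n/2)·S*_{n,a}((t−x)²; x) = x/2. -/
open Real Filter

lemma sum0 (c : ℝ) : ∑' k : ℕ, c ^ k / (Nat.factorial k : ℝ) = Real.exp c := by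
  rw [Real.exp_eq_exp_ℝ, NormedSpace.exp_eq_tsum_div]

lemma summable1 (c : ℝ) : Summable (fun k : ℕ => (k : ℝ) * c ^ k / (Nat.factorial k : ℝ)) := by
  rw [← summable_nat_add_iff 1]
  apply ((Real.summable_pow_div_factorial c).mul_left c).congr
  intro k
  have hk : ((Nat.factorial k : ℝ)) ≠ 0 := Nat.cast_ne_zero.2 (Nat.factorial_ne_zero k)
  have hk1 : ((k:ℝ) + 1) ≠ 0 := by positivity
  rw [Nat.factorial_succ]
  push_cast
  field_simp
  ring

lemma sum1 (c : ℝ) : ∑' k : ℕ, (k : ℝ) * c ^ k / (Nat.factorial k : ℝ) = c * Real.exp c := by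
  rw [Summable.tsum_eq_zero_add (summable1 c)]
  simp only [Nat.cast_zero, zero_mul, zero_div, zero_add]
  rw [← sum0 c, ← tsum_mul_left]
  congr 1; funext k
  have hk : ((Nat.factorial k : ℝ)) ≠ 0 := Nat.cast_ne_zero.2 (Nat.factorial_ne_zero k)
  have hk1 : ((k:ℝ) + 1) ≠ 0 := by positivity
  rw [Nat.factorial_succ]
  push_cast
  field_simp
  ring

lemma summable2 (c : ℝ) : Summable (fun k : ℕ => (k : ℝ) ^ 2 * c ^ k / (Nat.factorial k : ℝ)) := by
  rw [← summable_nat_add_iff 1]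
  apply (((summable1 c).add (Real.summable_pow_div_factorial c)).mul_left c).congr
  intro k
  have hk : ((Nat.factorial k : ℝ)) ≠ 0 := Nat.cast_ne_zero.2 (Nat.factorial_ne_zero k)
  have hk1 : ((k:ℝ) + 1) ≠ 0 := by positivity
  rw [Nat.factorial_succ]
  push_cast
  field_simp
  ring

lemma sum2 (c : ℝ) : ∑' k : ℕ, (k : ℝ) ^ 2 * c ^ k / (Nat.factorial k : ℝ)
    = (c ^ 2 + c) * Real.exp c := by
  rw [Summable.tsum_eq_zero_add (summable2 c)]
  simp only [Nat.cast_zero, ne_eq, OfNat.ofNat_ne_zero, not_false_eq_true, zero_pow, zero_mul,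
    zero_div, zero_add]
  have : (fun k : ℕ => ((k:ℝ)+1) ^ 2 * c ^ (k+1) / (Nat.factorial (k+1) : ℝ))
      = fun k : ℕ => c * ((k : ℝ) * c ^ k / (Nat.factorial k : ℝ))
        + c * (c ^ k / (Nat.factorial k : ℝ)) := by
    funext k
    have hk : ((Nat.factorial k : ℝ)) ≠ 0 := Nat.cast_ne_zero.2 (Nat.factorial_ne_zero k)
    have hk1 : ((k:ℝ) + 1) ≠ 0 := by positivity
    rw [Nat.factorial_succ]
    push_cast
    field_simp
    ring
  push_cast
  rw [this, Summable.tsum_add ((summable1 c).mul_left c)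
    ((Real.summable_pow_div_factorial c).mul_left c), tsum_mul_left, tsum_mul_left, sum0, sum1]
  ring

lemma szasz_closed (a : ℝ) (ha : 1 < a) (x : ℝ) (n : ℕ) (hn : 1 ≤ n) :
    szasz a n (fun t => (t - x) ^ 2) x =
      ((x * Real.log a / (a ^ ((1:ℝ)/n) - 1)) ^ 2 + x * Real.log a / (a ^ ((1:ℝ)/n) - 1)) / n ^ 2
      - 2 * x * (x * Real.log a / (a ^ ((1:ℝ)/n) - 1)) / n + x ^ 2 := by
  have ha0 : (0:ℝ) < a := lt_trans one_pos ha
  set b : ℝ := a ^ ((1:ℝ)/n) - 1 with hb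
  have hbpos : 0 < b := by
    have hnpos : (0:ℝ) < n := by exact_mod_cast Nat.pos_of_ne_zero (by omega)
    have : (1:ℝ) < a ^ ((1:ℝ)/n) :=
      (Real.one_lt_rpow_iff_of_pos ha0).2 (Or.inl ⟨ha, one_div_pos.2 hnpos⟩)
    rw [hb]; linarith
  have hb0 : b ≠ 0 := ne_of_gt hbpos
  have hn0 : ((n:ℝ)) ≠ 0 := Nat.cast_ne_zero.2 (by omega)
  set c : ℝ := x * Real.log a / b with hc
  have hexp : a ^ (-x / b) = Real.exp (-c) := by
    rw [Real.rpow_def_of_pos ha0]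
    congr 1
    rw [hc]; ring
  have key : (fun k : ℕ => a ^ (-x / b) * (x * Real.log a) ^ k / (b ^ k * (Nat.factorial k : ℝ))
        * ((k : ℝ) / n - x) ^ 2)
      = fun k : ℕ => (Real.exp (-c) / n ^ 2) * ((k : ℝ) ^ 2 * c ^ k / (Nat.factorial k : ℝ))
        + ((-(2 * x * Real.exp (-c)) / n) * ((k : ℝ) * c ^ k / (Nat.factorial k : ℝ))
          + (Real.exp (-c) * x ^ 2) * (c ^ k / (Nat.factorial k : ℝ))) := by
    funext k
    have hk : ((Nat.factorial k : ℝ)) ≠ 0 := Nat.cast_ne_zero.2 (Nat.factorial_ne_zero k)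
    rw [hexp, hc, div_pow]
    field_simp
    ring
  have : szasz a n (fun t => (t - x) ^ 2) x =
      (Real.exp (-c) / n ^ 2) * ((c ^ 2 + c) * Real.exp c)
        + ((-(2 * x * Real.exp (-c)) / n) * (c * Real.exp c)
          + (Real.exp (-c) * x ^ 2) * Real.exp c) := by
    rw [szasz, ← hb]
    simp only [key]
    rw [Summable.tsum_add ((summable2 c).mul_left _) (((summable1 c).mul_left _).add
      ((Real.summable_pow_div_factorial c).mul_left _)),
      Summable.tsum_add ((summable1 c).mul_left _) ((Real.summable_pow_div_factorial c).mul_left _),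
      tsum_mul_left, tsum_mul_left, tsum_mul_left, sum0, sum1, sum2]
  rw [this]
  rw [Real.exp_neg]
  have h := Real.exp_ne_zero c
  field_simp
  ring

lemma limit_part (a : ℝ) (ha : 1 < a) (x : ℝ) (hx : 0 ≤ x) (F : ℕ → ℝ)
    (closed : ∀ n : ℕ, 1 ≤ n → F n =
      ((x * Real.log a / (a ^ ((1:ℝ)/n) - 1)) ^ 2 + x * Real.log a / (a ^ ((1:ℝ)/n) - 1)) / n ^ 2
      - 2 * x * (x * Real.log a / (a ^ ((1:ℝ)/n) - 1)) / n + x ^ 2) :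
    Tendsto (fun n : ℕ => (n : ℝ) / 2 * F n) atTop (nhds (x / 2)) := by
  have ha0 : (0:ℝ) < a := lt_trans one_pos ha
  set L : ℝ := Real.log a with hL
  have hLpos : 0 < L := Real.log_pos ha
  set u : ℕ → ℝ := fun n => n * (a ^ ((1:ℝ)/n) - 1) with hu
  -- quantitative bound
  have hbound : ∀ᶠ n : ℕ in atTop, |u n - L| ≤ 3 / 4 * L ^ 2 / n := by
    filter_upwards [eventually_ge_atTop (max 1 ⌈L⌉₊)] with n hn
    have hn1 : 1 ≤ n := le_trans (le_max_left _ _) hn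
    have hnL : L ≤ n := by
      calc L ≤ ⌈L⌉₊ := Nat.le_ceil L
      _ ≤ n := by exact_mod_cast le_trans (le_max_right _ _) hn
    have hnpos : (0:ℝ) < n := by exact_mod_cast Nat.pos_of_ne_zero (by omega)
    have hrw : a ^ ((1:ℝ)/n) = Real.exp (L / n) := by
      rw [Real.rpow_def_of_pos ha0]; congr 1; rw [hL]; ring
    have ht1 : |L / n| ≤ 1 := by
      rw [abs_of_pos (by positivity)]
      rw [div_le_one hnpos]; exact hnL
    have hb := Real.exp_bound ht1 (n := 2) (by norm_num)
    have hsum : ∑ i ∈ Finset.range 2, (L/n) ^ i / (Nat.factorial i : ℝ) = 1 + L / n := by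
      simp [Finset.sum_range_succ]
    rw [hsum] at hb
    have habs : |L / n| ^ 2 = L ^ 2 / n ^ 2 := by
      rw [abs_of_pos (by positivity), div_pow]
    have hb2 : |Real.exp (L/n) - (1 + L/n)| ≤ L ^ 2 / n ^ 2 * (3 / 4) := by
      calc |Real.exp (L/n) - (1 + L/n)| ≤ |L/n| ^ 2 * ((2:ℕ).succ / ((Nat.factorial 2) * 2)) := hb
      _ = L ^ 2 / n ^ 2 * (3 / 4) := by rw [habs]; norm_num [Nat.factorial]
    have hun : u n - L = n * (Real.exp (L/n) - (1 + L/n)) := by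
      rw [hu]; simp only [hrw]
      field_simp
      ring
    rw [hun, abs_mul, abs_of_pos hnpos]
    calc (n:ℝ) * |Real.exp (L/n) - (1 + L/n)| ≤ n * (L ^ 2 / n ^ 2 * (3/4)) := by
          exact mul_le_mul_of_nonneg_left hb2 (le_of_lt hnpos)
    _ = 3 / 4 * L ^ 2 / n := by field_simp
  have hglim : Tendsto (fun n : ℕ => 3 / 4 * L ^ 2 / n) atTop (nhds 0) :=
    tendsto_const_div_atTop_nhds_zero_nat _
  -- u → L
  have huL : Tendsto u atTop (nhds L) := by
    rw [← tendsto_sub_nhds_zero_iff]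
    exact squeeze_zero_norm' hbound hglim
  -- n * (u n - L)^2 → 0
  have hsq : Tendsto (fun n : ℕ => (n : ℝ) * (u n - L) ^ 2) atTop (nhds 0) := by
    refine squeeze_zero_norm' (a := fun n : ℕ => 9 / 16 * L ^ 4 / n) ?_
      (tendsto_const_div_atTop_nhds_zero_nat _)
    filter_upwards [hbound, eventually_ge_atTop 1] with n hb1 hn1
    have hnpos : (0:ℝ) < n := by exact_mod_cast Nat.pos_of_ne_zero (by omega)
    have h1 : (u n - L) ^ 2 ≤ (3 / 4 * L ^ 2 / n) ^ 2 := by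
      rw [← sq_abs]
      apply pow_le_pow_left₀ (abs_nonneg _) hb1
    rw [Real.norm_eq_abs, abs_of_nonneg (by positivity)]
    calc (n:ℝ) * (u n - L) ^ 2 ≤ n * (3/4 * L ^ 2 / n) ^ 2 :=
          mul_le_mul_of_nonneg_left h1 (le_of_lt hnpos)
    _ = 9 / 16 * L ^ 4 / n := by field_simp; ring
  -- assemble
  have hL2 : (2 * L : ℝ) ≠ 0 := by positivity
  have hL2' : (2 * L ^ 2 : ℝ) ≠ 0 := by positivity
  have hmain : Tendsto (fun n : ℕ => x * L / (2 * u n)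
      + x ^ 2 * ((n : ℝ) * (u n - L) ^ 2) / (2 * (u n) ^ 2)) atTop
      (nhds (x * L / (2 * L) + x ^ 2 * 0 / (2 * L ^ 2))) := by
    apply Tendsto.add
    · exact Tendsto.div tendsto_const_nhds (Tendsto.const_mul _ huL) hL2
    · exact Tendsto.div (Tendsto.const_mul _ hsq)
        (Tendsto.const_mul _ ((huL.pow 2))) hL2'
  have heq : x * L / (2 * L) + x ^ 2 * 0 / (2 * L ^ 2) = x / 2 := by
    field_simp; ring
  rw [heq] at hmain
  apply hmain.congr'
  filter_upwards [eventually_ge_atTop (max 1 ⌈L⌉₊)] with n hn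
  have hn1 : 1 ≤ n := le_trans (le_max_left _ _) hn
  have hnpos : (0:ℝ) < n := by exact_mod_cast Nat.pos_of_ne_zero (by omega)
  have hbpos : 0 < a ^ ((1:ℝ)/n) - 1 := by
    have : (1:ℝ) < a ^ ((1:ℝ)/n) :=
      (Real.one_lt_rpow_iff_of_pos ha0).2 (Or.inl ⟨ha, one_div_pos.2 hnpos⟩)
    linarith
  have hb0 : (a ^ ((1:ℝ)/n) - 1) ≠ 0 := ne_of_gt hbpos
  rw [closed n hn1, hu]
  have hn0 : (n:ℝ) ≠ 0 := ne_of_gt hnpos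
  field_simp
  ring

theorem stmt_14 (a : ℝ) (ha : 1 < a) (x : ℝ) (hx : 0 ≤ x) :
    Filter.Tendsto (fun n : ℕ => (n : ℝ) / 2 * szasz a n (fun t => (t - x) ^ 2) x)
      Filter.atTop (nhds (x / 2)) :=
  limit_part a ha x hx _ (fun n hn => szasz_closed a ha x n hn)
end
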